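/- arXiv:2505.23205 — 3 statements merged into one kernel-verified Lean document; each statement's English description precedes it below -/
import Mathlib

section
/- For every natural number x and every strictly sorted duplicate-free list L of natural numbers all of whose elements are ≥ x, the value find_gap x L is not an element of L. -/
def findGap (x : ℕ) : List ℕ → ℕ
  | [] => x
  | h :: t => if h = x then findGap (x + 1) t else x

lemma findGap_ge (x : ℕ) (L : List ℕ) : x ≤ findGap x L := by
  induction L generalizing x with
  | nil => simp [findGap]
  | cons h t ih =>
    simp only [findGap]
    split
    · exact le_trans (Nat.le_succ x) (ih (x+1))
    · exact le_refl x

theorem stmt_1 (x : ℕ) (L : List ℕ) (hsorted : L.Pairwise (· < ·))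
    (hge : ∀ y ∈ L, x ≤ y) : findGap x L ∉ L := by
  induction L generalizing x with
  | nil => simp
  | cons h t ih =>
    simp only [findGap]
    split
    · rename_i heq
      subst heq
      intro hmem
      rcases List.mem_cons.mp hmem with h1 | h2
      · have := findGap_ge (h+1) t
        omega
      · exact ih (h+1) hsorted.of_cons (fun y hy => (List.pairwise_cons.mp hsorted).1 y hy) h2
    · rename_i hne
      intro hmem
      rcases List.mem_cons.mp hmem with h1 | h2
      · exact hne h1.symm
      · have := (List.pairwise_cons.mp hsorted).1 _ h2
        have := hge h (List.mem_cons_self)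
        omega
end

section
/- For all natural numbers x, n and every strictly sorted list L of natural numbers, if x ≤ n < find_gap x L, then n is an element of L. -/
theorem stmt_2 (x n : ℕ) (L : List ℕ) (hsorted : L.Pairwise (· < ·))
    (hx : x ≤ n) (hn : n < findGap x L) : n ∈ L := by
  induction L generalizing x with
  | nil => simp [findGap] at hn; omega
  | cons h t ih =>
    simp only [findGap] at hn
    split at hn
    · rename_i he
      subst he
      rcases eq_or_lt_of_le hx with rfl | hlt
      · exact List.mem_cons_self
      · exact List.mem_cons_of_mem _ (ih _ hsorted.of_cons hlt hn)
    · omega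
end

section
/- Let M be a numerical semigroup with gaps list G (the strictly sorted list of elements of ℕ \ M) and let n be a natural number. Define apery G n as the list obtained by removing the elements of G from the concatenation of [0, 1, ..., n-1] with the list obtained by adding n to every element of G. Then x is an element of apery G n if and only if x ∈ M and (n ≤ x → x − n ∉ M), where subtraction is truncated subtraction on ℕ. -/
def apery (G : List ℕ) (n : ℕ) : List ℕ :=
  ((List.range n) ++ G.map (· + n)).filter (fun x => decide (x ∉ G))

theorem stmt_4 (M : AddSubmonoid ℕ) (hfin : Set.Finite ((M : Set ℕ)ᶜ))
    (G : List ℕ) (hsorted : G.Pairwise (· < ·))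
    (hG : ∀ x : ℕ, x ∈ G ↔ x ∉ M) (n x : ℕ) :
    x ∈ apery G n ↔ (x ∈ M ∧ (n ≤ x → x - n ∉ M)) := by
  simp only [apery, List.mem_filter, List.mem_append, List.mem_range, List.mem_map,
    decide_eq_true_eq]
  constructor
  · rintro ⟨h1, h2⟩
    have hxM : x ∈ M := by
      by_contra h
      exact h2 ((hG x).2 h)
    refine ⟨hxM, fun hn => ?_⟩
    rcases h1 with h1 | ⟨g, hg, rfl⟩
    · omega
    · simpa using (hG g).1 hg
  · rintro ⟨hxM, h2⟩
    refine ⟨?_, fun h => ((hG x).1 h) hxM⟩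
    rcases lt_or_ge x n with h | h
    · exact Or.inl h
    · exact Or.inr ⟨x - n, (hG _).2 (h2 h), by omega⟩
end
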